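/- The consequence operation C_GBD of the logic GBD satisfies Inclusion (Γ ⊆ C_GBD(Γ)), Idempotency (C_GBD(Γ) = C_GBD(C_GBD(Γ))), Monotonicity (Γ ⊆ Δ implies C_GBD(Γ) ⊆ C_GBD(Δ)), and Compactness (if α ∈ C_GBD(Γ) then α ∈ C_GBD(Γ′) for some finite Γ′ ⊆ Γ), for all information sets Γ, Δ ⊆ L and all α ∈ L. -/

import Mathlib

/-- Propositional formulas over a set of atoms `A`, with the usual connectives,
`⊥` and `⊤`. -/
inductive PLForm (A : Type) : Type
  | atom   : A → PLForm A
  | falsum : PLForm A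
  | verum  : PLForm A
  | neg    : PLForm A → PLForm A
  | conj   : PLForm A → PLForm A → PLForm A
  | disj   : PLForm A → PLForm A → PLForm A
  | impl   : PLForm A → PLForm A → PLForm A

/-- Evaluation of a propositional formula under a classical valuation. -/
def PLForm.eval {A : Type} (v : A → Bool) : PLForm A → Bool
  | .atom a   => v a
  | .falsum   => false
  | .verum    => true
  | .neg φ    => !(PLForm.eval v φ)
  | .conj φ ψ => PLForm.eval v φ && PLForm.eval v ψ
  | .disj φ ψ => PLForm.eval v φ || PLForm.eval v ψ
  | .impl φ ψ => !(PLForm.eval v φ) || PLForm.eval v ψ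

/-- Classical propositional consequence `X ⊢_PL φ`: every valuation satisfying
all members of `X` satisfies `φ`. -/
def PLCons {A : Type} (X : Set (PLForm A)) (φ : PLForm A) : Prop :=
  ∀ v : A → Bool, (∀ ψ ∈ X, PLForm.eval v ψ = true) → PLForm.eval v φ = true

/-- The language `L = L_B ∪ L_D`: a potential belief `φ` or a potential
disbelief `φ̄` for each propositional formula `φ`. -/
inductive LSent (A : Type) : Type
  | bel : PLForm A → LSent A
  | dis : PLForm A → LSent A

/-- The set of potential beliefs `L_B`. -/
def LB (A : Type) : Set (LSent A) := Set.range LSent.bel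

/-- The set of potential disbeliefs `L_D`. -/
def LD (A : Type) : Set (LSent A) := Set.range LSent.dis

/-- The propositional formulas believed in `Γ` (so that `Γ_B` corresponds to
`LSent.bel '' bels Γ = Γ ∩ LB A`). -/
def bels {A : Type} (Γ : Set (LSent A)) : Set (PLForm A) := {φ | LSent.bel φ ∈ Γ}

/-- The propositional formulas disbelieved in `Γ`. -/
def diss {A : Type} (Γ : Set (LSent A)) : Set (PLForm A) := {φ | LSent.dis φ ∈ Γ}

/-- The logic WBD: smallest relation closed under (B), (D⊥) and (WD). -/
inductive WBD {A : Type} : Set (LSent A) → LSent A → Prop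
  | B {Γ : Set (LSent A)} {φ : PLForm A} :
      PLCons (bels Γ) φ → WBD Γ (.bel φ)
  | Dbot {Γ : Set (LSent A)} {φ : PLForm A} :
      PLCons {φ} .falsum → WBD Γ (.dis φ)
  | WD {Γ : Set (LSent A)} {φ ψ : PLForm A} :
      LSent.dis ψ ∈ Γ → PLCons {φ} ψ → WBD Γ (.dis φ)

/-- The logic GBD: smallest relation closed under (B), (D⊥) and (GD). -/
inductive GBD {A : Type} : Set (LSent A) → LSent A → Prop
  | B {Γ : Set (LSent A)} {φ : PLForm A} :
      PLCons (bels Γ) φ → GBD Γ (.bel φ)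
  | Dbot {Γ : Set (LSent A)} {φ : PLForm A} :
      PLCons {φ} .falsum → GBD Γ (.dis φ)
  | GD {Γ : Set (LSent A)} {φ : PLForm A} :
      PLCons (PLForm.neg '' diss Γ) (.neg φ) → GBD Γ (.dis φ)

/-- The logic BD: smallest relation closed under (B), (D⊥) and (D). -/
inductive BD {A : Type} : Set (LSent A) → LSent A → Prop
  | B {Γ : Set (LSent A)} {φ : PLForm A} :
      PLCons (bels Γ) φ → BD Γ (.bel φ)
  | Dbot {Γ : Set (LSent A)} {φ : PLForm A} :
      PLCons {φ} .falsum → BD Γ (.dis φ)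
  | D {Γ : Set (LSent A)} {φ ψ : PLForm A} :
      LSent.dis ψ ∈ Γ → PLCons (insert φ (bels Γ)) ψ → BD Γ (.dis φ)

/-- The logic BN: smallest relation closed under (B), (D⊥), (WD) and (D→B). -/
inductive BN {A : Type} : Set (LSent A) → LSent A → Prop
  | B {Γ : Set (LSent A)} {φ : PLForm A} :
      PLCons (bels Γ) φ → BN Γ (.bel φ)
  | Dbot {Γ : Set (LSent A)} {φ : PLForm A} :
      PLCons {φ} .falsum → BN Γ (.dis φ)
  | WD {Γ : Set (LSent A)} {φ ψ : PLForm A} :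
      LSent.dis ψ ∈ Γ → PLCons {φ} ψ → BN Γ (.dis φ)
  | DtoB {Γ : Set (LSent A)} {φ : PLForm A} :
      BN Γ (.dis φ) → BN Γ (.bel (.neg φ))

/-- Satisfaction in a WBD-model `(M, 𝒩)` (also used for BD-models):
a belief `φ` holds iff `M ⊆ M(φ)`; a disbelief `φ̄` holds iff some
`N ∈ 𝒩` satisfies `N ⊆ M(¬φ)`. -/
def satWBD {A : Type} (M : Set (A → Bool)) (𝒩 : Set (Set (A → Bool))) :
    LSent A → Prop
  | .bel φ => ∀ v ∈ M, PLForm.eval v φ = true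
  | .dis φ => ∃ N ∈ 𝒩, ∀ v ∈ N, PLForm.eval v φ = false

/-- WBD-entailment: truth in all WBD-models (with `𝒩` nonempty) of `Γ`. -/
def WBDent {A : Type} (Γ : Set (LSent A)) (α : LSent A) : Prop :=
  ∀ (M : Set (A → Bool)) (𝒩 : Set (Set (A → Bool))), 𝒩.Nonempty →
    (∀ β ∈ Γ, satWBD M 𝒩 β) → satWBD M 𝒩 α

/-- Satisfaction in a GBD-model `(M, N)`. -/
def satGBD {A : Type} (M N : Set (A → Bool)) : LSent A → Prop
  | .bel φ => ∀ v ∈ M, PLForm.eval v φ = true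
  | .dis φ => ∀ v ∈ N, PLForm.eval v φ = false

/-- GBD-entailment: truth in all GBD-models of `Γ`. -/
def GBDent {A : Type} (Γ : Set (LSent A)) (α : LSent A) : Prop :=
  ∀ (M N : Set (A → Bool)), (∀ β ∈ Γ, satGBD M N β) → satGBD M N α

/-- BD-entailment: truth in all BD-models of `Γ`, i.e. WBD-models where
every `N ∈ 𝒩` is a subset of `M`. -/
def BDent {A : Type} (Γ : Set (LSent A)) (α : LSent A) : Prop :=
  ∀ (M : Set (A → Bool)) (𝒩 : Set (Set (A → Bool))), 𝒩.Nonempty →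
    (∀ N ∈ 𝒩, N ⊆ M) → (∀ β ∈ Γ, satWBD M 𝒩 β) → satWBD M 𝒩 α

/-- `Γ` is B-inconsistent iff `Γ_B ⊢_BD ⊥`. -/
def BIncons {A : Type} (Γ : Set (LSent A)) : Prop :=
  BD (Γ ∩ LB A) (.bel .falsum)

/-- `Γ` is D-inconsistent iff `Γ_D ⊢_BD ⊤̄`. -/
def DIncons {A : Type} (Γ : Set (LSent A)) : Prop :=
  BD (Γ ∩ LD A) (.dis .verum)

/-- `Γ` is BD-inconsistent iff `Γ ⊢_BD φ` and `Γ ⊢_BD φ̄` for some `φ ∈ L_B`. -/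
def BDIncons {A : Type} (Γ : Set (LSent A)) : Prop :=
  ∃ φ : PLForm A, BD Γ (.bel φ) ∧ BD Γ (.dis φ)

open Classical Filter in

lemma PLCons.compact {A : Type} {X : Set (PLForm A)} {φ : PLForm A}
    (h : PLCons X φ) : ∃ Y ⊆ X, Y.Finite ∧ PLCons Y φ := by
  by_contra hc
  push_neg at hc
  have hfin : ∀ S : Finset ↥X, ∃ v : A → Bool,
      (∀ ψ ∈ Subtype.val '' (↑S : Set ↥X), PLForm.eval v ψ = true) ∧
      PLForm.eval v φ = false := by
    intro S
    have hns : ¬ PLCons (Subtype.val '' (↑S : Set ↥X)) φ := by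
      refine hc _ ?_ (S.finite_toSet.image _)
      rintro x ⟨⟨y, hy⟩, -, rfl⟩; exact hy
    simp only [PLCons, not_forall] at hns
    obtain ⟨v, hv, hvφ⟩ := hns
    exact ⟨v, hv, by simpa using hvφ⟩
  choose v hv hvφ using hfin
  haveI : Nonempty (Finset ↥X) := ⟨∅⟩
  let U : Ultrafilter (Finset ↥X) := Ultrafilter.of atTop
  have hUle : (U : Filter (Finset ↥X)) ≤ atTop := Ultrafilter.of_le _
  let w : A → Bool := fun a => if ({S | v S a = true} ∈ U) then true else false
  have key : ∀ ψ : PLForm A,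
      ∀ᶠ S in (U : Filter (Finset ↥X)), PLForm.eval (v S) ψ = PLForm.eval w ψ := by
    intro ψ
    induction ψ with
    | atom a =>
        by_cases hU : {S | v S a = true} ∈ U
        · have : w a = true := by simp [w, hU]
          filter_upwards [hU] with S hS
          simp [PLForm.eval, hS, this]
        · have hw : w a = false := by simp [w, hU]
          have hUc : {S | ¬ (v S a = true)} ∈ U := Ultrafilter.compl_mem_iff_notMem.2 hU
          filter_upwards [hUc] with S hS
          simp only [Bool.not_eq_true] at hS
          simp [PLForm.eval, hS, hw]
    | falsum => exact Filter.Eventually.of_forall fun S => rfl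
    | verum => exact Filter.Eventually.of_forall fun S => rfl
    | neg ψ ih => filter_upwards [ih] with S hS; simp [PLForm.eval, hS]
    | conj ψ χ ih1 ih2 => filter_upwards [ih1, ih2] with S h1 h2; simp [PLForm.eval, h1, h2]
    | disj ψ χ ih1 ih2 => filter_upwards [ih1, ih2] with S h1 h2; simp [PLForm.eval, h1, h2]
    | impl ψ χ ih1 ih2 => filter_upwards [ih1, ih2] with S h1 h2; simp [PLForm.eval, h1, h2]
  have hwX : ∀ ψ ∈ X, PLForm.eval w ψ = true := by
    intro ψ hψ
    have hmem : ∀ᶠ S in (U : Filter (Finset ↥X)), (⟨ψ, hψ⟩ : ↥X) ∈ S := by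
      refine hUle ?_
      refine Filter.eventually_atTop.2 ⟨{⟨ψ, hψ⟩}, fun b hb => ?_⟩
      exact hb (Finset.mem_singleton_self _)
    have := ((key ψ).and hmem).exists
    obtain ⟨S, h1, h2⟩ := this
    rw [← h1]
    exact hv S ψ ⟨⟨ψ, hψ⟩, h2, rfl⟩
  have hwφ : PLForm.eval w φ = false := by
    obtain ⟨S, h1⟩ := (key φ).exists
    rw [← h1]; exact hvφ S
  have := h w hwX
  rw [hwφ] at this
  exact Bool.false_ne_true this

lemma PLCons.mono {A : Type} {X Y : Set (PLForm A)} {φ : PLForm A}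
    (hXY : X ⊆ Y) (h : PLCons X φ) : PLCons Y φ :=
  fun v hv => h v fun ψ hψ => hv ψ (hXY hψ)

lemma GBD.cut {A : Type} {Γ : Set (LSent A)} {α : LSent A}
    (h : GBD {β | GBD Γ β} α) : GBD Γ α := by
  cases h with
  | B h =>
      refine GBD.B fun v hv => h v ?_
      intro ψ hψ
      have hψ' : GBD Γ (.bel ψ) := hψ
      cases hψ' with
      | B h' => exact h' v hv
  | Dbot h => exact GBD.Dbot h
  | GD h =>
      refine GBD.GD fun v hv => h v ?_
      rintro χ ⟨ψ, hψ, rfl⟩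
      have hψ' : GBD Γ (.dis ψ) := hψ
      cases hψ' with
      | Dbot h' =>
          simp only [PLForm.eval]
          cases hb : PLForm.eval v ψ with
          | false => rfl
          | true =>
              have := h' v (by rintro χ rfl; exact hb)
              simp [PLForm.eval] at this
      | GD h' => exact h' v hv

/-- The consequence operation of GBD satisfies Inclusion, Idempotency,
Monotonicity and Compactness. -/
theorem gbd_tarskian_compact (A : Type) :
    (∀ Γ : Set (LSent A), Γ ⊆ {α | GBD Γ α}) ∧
    (∀ Γ : Set (LSent A), {α | GBD Γ α} = {α | GBD {β | GBD Γ β} α}) ∧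
    (∀ Γ Δ : Set (LSent A), Γ ⊆ Δ → {α | GBD Γ α} ⊆ {α | GBD Δ α}) ∧
    (∀ (Γ : Set (LSent A)) (α : LSent A), GBD Γ α →
      ∃ Γ' ⊆ Γ, Γ'.Finite ∧ GBD Γ' α) := by
  have incl : ∀ Γ : Set (LSent A), Γ ⊆ {α | GBD Γ α} := by
    intro Γ α hα
    cases α with
    | bel φ => exact GBD.B fun v hv => hv φ hα
    | dis φ => exact GBD.GD fun v hv => hv _ ⟨φ, hα, rfl⟩
  have mono : ∀ Γ Δ : Set (LSent A), Γ ⊆ Δ → {α | GBD Γ α} ⊆ {α | GBD Δ α} := by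
    intro Γ Δ hΓΔ α hα
    cases hα with
    | B h => exact GBD.B (h.mono fun ψ hψ => hΓΔ hψ)
    | Dbot h => exact GBD.Dbot h
    | GD h => exact GBD.GD (h.mono (Set.image_mono fun ψ hψ => hΓΔ hψ))
  refine ⟨incl, ?_, mono, ?_⟩
  · intro Γ
    apply Set.Subset.antisymm
    · exact mono _ _ (incl Γ)
    · intro α hα; exact GBD.cut hα
  · intro Γ α hα
    cases hα with
    | @B φ h =>
        obtain ⟨Y, hYX, hYfin, hY⟩ := h.compact
        refine ⟨LSent.bel '' Y, ?_, hYfin.image _, ?_⟩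
        · rintro x ⟨ψ, hψ, rfl⟩; exact hYX hψ
        · refine GBD.B (hY.mono ?_)
          intro ψ hψ; exact ⟨ψ, hψ, rfl⟩
    | Dbot h => exact ⟨∅, Set.empty_subset _, Set.finite_empty, GBD.Dbot h⟩
    | @GD φ h =>
        obtain ⟨Z, hZ, hZfin, hY⟩ :=
          (Set.exists_subset_image_finite_and (p := fun t => PLCons t (.neg φ))).1 h.compact
        refine ⟨LSent.dis '' Z, ?_, hZfin.image _, ?_⟩
        · rintro x ⟨ψ, hψ, rfl⟩; exact hZ hψ
        · refine GBD.GD (hY.mono (Set.image_mono ?_))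
          rintro ψ hψ; exact ⟨ψ, hψ, rfl⟩
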